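/- Let G' = (V',E') be a finite simple graph, r a positive integer, G = G(G',r) the gadget graph, X = A₁ ∪ A₂ ∪ B, and γ_r = (r²+r−1)/(2r²+2r−1). If X is not a maximal γ_r-quasi-clique in G, then G' contains a clique of size r. (Any γ_r-quasi-clique of G strictly containing X has the form X ∪ M with ∅ ≠ M ⊆ V'; necessarily |M| = r and M is a clique in G'.) -/

import Mathlib

open SimpleGraph Set

/-- Vertex type of the gadget graph: the original vertices `V`, plus
`A₁` and `A₂` (each of size `r²`) and `B` (of size `r`). -/
abbrev GadgetV (V : Type*) (r : ℕ) : Type _ := V ⊕ (Fin (r ^ 2) ⊕ Fin (r ^ 2) ⊕ Fin r)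

/-- Membership in `A₁`. -/
def isA1 {V : Type*} {r : ℕ} : GadgetV V r → Prop
  | Sum.inr (Sum.inl _) => True
  | _ => False

/-- Membership in `A₂`. -/
def isA2 {V : Type*} {r : ℕ} : GadgetV V r → Prop
  | Sum.inr (Sum.inr (Sum.inl _)) => True
  | _ => False

/-- Membership in `B`. -/
def isB {V : Type*} {r : ℕ} : GadgetV V r → Prop
  | Sum.inr (Sum.inr (Sum.inr _)) => True
  | _ => False

/-- The gadget graph `G(G',r)`: all edges of `G'`, `A₁`, `A₂`, `B` are cliques,
all pairs between `A₁` and `A₂`, between `A₁` and `B`, and between `A₁` and `V'`.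
(A vertex of `A₁` is adjacent to every other vertex.) -/
def gadget {V : Type*} (G' : SimpleGraph V) (r : ℕ) : SimpleGraph (GadgetV V r) :=
  SimpleGraph.fromRel fun a b =>
    isA1 a ∨ (∃ u v, a = Sum.inl u ∧ b = Sum.inl v ∧ G'.Adj u v) ∨
      (isA2 a ∧ isA2 b) ∨ (isB a ∧ isB b)

/-- The set `X = A₁ ∪ A₂ ∪ B`. -/
def Xset (V : Type*) (r : ℕ) : Set (GadgetV V r) := {x | isA1 x ∨ isA2 x ∨ isB x}

/-- Degree of a vertex `v` in the subgraph of `G` induced on `Q`: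
the number of neighbors of `v` lying in `Q`. -/
noncomputable def degIn {W : Type*} (G : SimpleGraph W) (Q : Set W) (v : W) : ℕ :=
  (Q ∩ G.neighborSet v).ncard

/-- `Q` is a `γ`-quasi-clique in `G`: the induced subgraph `G[Q]` is connected and
every vertex of `Q` has degree at least `⌈γ·(|Q|-1)⌉` in `G[Q]`. -/
def IsQuasiClique {W : Type*} (G : SimpleGraph W) (γ : ℚ) (Q : Set W) : Prop :=
  (G.induce Q).Connected ∧ ∀ v ∈ Q, ⌈γ * ((Q.ncard : ℚ) - 1)⌉ ≤ (degIn G Q v : ℤ)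

/-- `γ_r = (r²+r−1)/(2r²+2r−1)`. -/
def gammaR (r : ℕ) : ℚ := ((r : ℚ) ^ 2 + r - 1) / (2 * (r : ℚ) ^ 2 + 2 * r - 1)

/-- If `X` is not a maximal `γ_r`-quasi-clique in the gadget graph (i.e. some
`γ_r`-quasi-clique strictly contains `X`), then `G'` contains a clique of
size `r`. -/
lemma gadget_adj_B {V : Type*} (G' : SimpleGraph V) {r : ℕ} (j : Fin r) (x : GadgetV V r) :
    (gadget G' r).Adj (Sum.inr (Sum.inr (Sum.inr j))) x ↔
      ((∃ i : Fin (r^2), Sum.inr (Sum.inl i) = x) ∨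
       (∃ i : Fin r, i ≠ j ∧ Sum.inr (Sum.inr (Sum.inr i)) = x)) := by
  rcases x with u | i | i | i <;>
    simp [gadget, SimpleGraph.fromRel_adj, isA1, isA2, isB, eq_comm, Ne]

lemma gadget_adj_inl {V : Type*} (G' : SimpleGraph V) {r : ℕ} (u : V) (x : GadgetV V r) :
    (gadget G' r).Adj (Sum.inl u) x ↔
      ((∃ i : Fin (r^2), Sum.inr (Sum.inl i) = x) ∨
       (∃ u', Sum.inl u' = x ∧ G'.Adj u u')) := by
  rcases x with u' | i | i | i <;>
    simp [gadget, SimpleGraph.fromRel_adj, isA1, isA2, isB, G'.adj_comm u, eq_comm]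
  exact fun h he => G'.loopless.irrefl u' (by rw [he] at h; exact h)

lemma ncard_range_fin {W : Type*} {k : ℕ} (f : Fin k → W) (hf : Function.Injective f) :
    (Set.range f).ncard = k := by
  rw [← Set.image_univ, Set.ncard_image_of_injective _ hf, Set.ncard_univ]
  simp

theorem stmt_13 {V : Type*} [Fintype V] (G' : SimpleGraph V) (r : ℕ) (hr : 0 < r)
    (h : ∃ Q' : Set (GadgetV V r),
        IsQuasiClique (gadget G' r) (gammaR r) Q' ∧ Xset V r ⊂ Q') :
    ∃ L : Finset V, G'.IsNClique r L := by
  classical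
  obtain ⟨Q, ⟨-, hdeg⟩, hXQ⟩ := h
  set M : Set V := {u | Sum.inl u ∈ Q} with hMdef
  have hinr : ∀ y : Fin (r^2) ⊕ Fin (r^2) ⊕ Fin r, (Sum.inr y : GadgetV V r) ∈ Q := by
    intro y
    apply hXQ.1
    rcases y with i | i | i <;> simp [Xset, isA1, isA2, isB]
  -- M nonempty
  obtain ⟨x0, hx0Q, hx0X⟩ := exists_of_ssubset hXQ
  have hMne : 1 ≤ M.ncard := by
    rcases x0 with u | y
    · exact (Set.ncard_pos (Set.toFinite M)).2 ⟨u, hx0Q⟩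
    · exact absurd (by rcases y with i|i|i <;> simp [Xset, isA1, isA2, isB]) hx0X
  -- cardinality of Q
  have hQcard : Q.ncard = r^2 + (r^2 + r) + M.ncard := by
    have hQeq : Q = Set.range (Sum.inr : _ → GadgetV V r) ∪ Sum.inl '' M := by
      ext x
      rcases x with u | y
      · simp [hMdef]
      · simp [hinr y]
    have hdisj : Disjoint (Set.range (Sum.inr : (Fin (r^2) ⊕ Fin (r^2) ⊕ Fin r) → GadgetV V r))
        (Sum.inl '' M) := by
      rw [Set.disjoint_left]; rintro x ⟨y, rfl⟩ ⟨u, -, h⟩; simp at h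
    rw [hQeq, Set.ncard_union_eq hdisj (Set.toFinite _) (Set.toFinite _),
      Set.ncard_image_of_injective _ Sum.inl_injective, ← Set.image_univ,
      Set.ncard_image_of_injective _ Sum.inr_injective, Set.ncard_univ]
    simp
  -- rationals bookkeeping
  set rq : ℚ := (r : ℚ) with hrq
  have hrq1 : 1 ≤ rq := by rw [hrq]; exact_mod_cast hr
  have hD : (0:ℚ) < 2 * rq ^ 2 + 2 * rq - 1 := by nlinarith
  have hP : (0:ℚ) < rq ^ 2 + rq - 1 := by nlinarith
  have hkey : ∀ v ∈ Q, (rq ^ 2 + rq - 1) * ((Q.ncard : ℚ) - 1)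
      ≤ (degIn (gadget G' r) Q v : ℚ) * (2 * rq ^ 2 + 2 * rq - 1) := by
    intro v hv
    have h1 := hdeg v hv
    rw [Int.ceil_le] at h1
    rw [gammaR, div_mul_eq_mul_div, div_le_iff₀ hD] at h1
    push_cast at h1 ⊢
    convert h1 using 2
  -- degree of a B vertex
  have hdegB : degIn (gadget G' r) Q (Sum.inr (Sum.inr (Sum.inr ⟨0, hr⟩))) = r^2 + (r - 1) := by
    have hNB : Q ∩ (gadget G' r).neighborSet (Sum.inr (Sum.inr (Sum.inr ⟨0, hr⟩))) =
        Set.range (fun i : Fin (r^2) => (Sum.inr (Sum.inl i) : GadgetV V r)) ∪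
        ((Set.range fun i : Fin r => (Sum.inr (Sum.inr (Sum.inr i)) : GadgetV V r)) \
          {Sum.inr (Sum.inr (Sum.inr ⟨0, hr⟩))}) := by
      ext x
      simp only [Set.mem_inter_iff, mem_neighborSet, gadget_adj_B, Set.mem_union, Set.mem_range,
        Set.mem_diff, Set.mem_singleton_iff]
      constructor
      · rintro ⟨hxQ, (⟨i, rfl⟩ | ⟨i, hij, rfl⟩)⟩
        · exact Or.inl ⟨i, rfl⟩
        · exact Or.inr ⟨⟨i, rfl⟩, by simpa using hij⟩
      · rintro (⟨i, rfl⟩ | ⟨⟨i, rfl⟩, hne⟩)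
        · exact ⟨hinr _, Or.inl ⟨i, rfl⟩⟩
        · refine ⟨hinr _, Or.inr ⟨i, ?_, rfl⟩⟩; simpa using hne
    have hdisj : Disjoint (Set.range (fun i : Fin (r^2) => (Sum.inr (Sum.inl i) : GadgetV V r)))
        ((Set.range fun i : Fin r => (Sum.inr (Sum.inr (Sum.inr i)) : GadgetV V r)) \
          {Sum.inr (Sum.inr (Sum.inr ⟨0, hr⟩))}) := by
      rw [Set.disjoint_left]; rintro x ⟨i, rfl⟩ ⟨⟨i', h⟩, -⟩; simp at h
    have hmem : (Sum.inr (Sum.inr (Sum.inr ⟨0, hr⟩)) : GadgetV V r) ∈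
        Set.range (fun i : Fin r => (Sum.inr (Sum.inr (Sum.inr i)) : GadgetV V r)) :=
      ⟨⟨0, hr⟩, rfl⟩
    rw [degIn, hNB, Set.ncard_union_eq hdisj (Set.toFinite _) (Set.toFinite _),
      ncard_range_fin _ (fun a b hab => by simpa using hab),
      Set.ncard_diff_singleton_of_mem hmem,
      ncard_range_fin _ (fun a b hab => by simpa using hab)]
  -- m ≤ r
  have hmler : M.ncard ≤ r := by
    have h1 := hkey _ (hinr (Sum.inr (Sum.inr ⟨0, hr⟩)))
    rw [hdegB, hQcard] at h1
    have hc : ((r^2 + (r-1) : ℕ) : ℚ) = rq ^ 2 + rq - 1 := by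
      rw [Nat.cast_add, Nat.cast_sub hr]; push_cast; ring
    rw [hc] at h1
    have h2 : ((r^2 + (r^2 + r) + M.ncard : ℕ) : ℚ) - 1 ≤ 2 * rq ^ 2 + 2 * rq - 1 := by
      nlinarith
    have h3 : (M.ncard : ℚ) ≤ rq := by push_cast at h2; nlinarith
    rw [hrq] at h3
    exact_mod_cast h3
  -- degrees of M vertices
  have hdegM : ∀ u ∈ M, degIn (gadget G' r) Q (Sum.inl u)
      = r^2 + {u' | u' ∈ M ∧ G'.Adj u u'}.ncard := by
    intro u hu
    have hNM : Q ∩ (gadget G' r).neighborSet (Sum.inl u) =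
        Set.range (fun i : Fin (r^2) => (Sum.inr (Sum.inl i) : GadgetV V r)) ∪
        Sum.inl '' {u' | u' ∈ M ∧ G'.Adj u u'} := by
      ext x
      simp only [Set.mem_inter_iff, mem_neighborSet, gadget_adj_inl, Set.mem_union, Set.mem_range,
        Set.mem_image, Set.mem_setOf_eq]
      constructor
      · rintro ⟨hxQ, (⟨i, rfl⟩ | ⟨u', rfl, hadj⟩)⟩
        · exact Or.inl ⟨i, rfl⟩
        · exact Or.inr ⟨u', ⟨hxQ, hadj⟩, rfl⟩
      · rintro (⟨i, rfl⟩ | ⟨u', ⟨hu'M, hadj⟩, rfl⟩)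
        · exact ⟨hinr _, Or.inl ⟨i, rfl⟩⟩
        · exact ⟨hu'M, Or.inr ⟨u', rfl, hadj⟩⟩
    have hdisj : Disjoint (Set.range (fun i : Fin (r^2) => (Sum.inr (Sum.inl i) : GadgetV V r)))
        (Sum.inl '' {u' | u' ∈ M ∧ G'.Adj u u'}) := by
      rw [Set.disjoint_left]; rintro x ⟨i, rfl⟩ ⟨u', -, h⟩; simp at h
    rw [degIn, hNM, Set.ncard_union_eq hdisj (Set.toFinite _) (Set.toFinite _),
      ncard_range_fin _ (fun a b hab => by simpa using hab),
      Set.ncard_image_of_injective _ Sum.inl_injective]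
  have hSsub : ∀ u ∈ M, {u' | u' ∈ M ∧ G'.Adj u u'} ⊆ M \ {u} := by
    intro u hu u' ⟨h1, h2⟩
    exact ⟨h1, fun he => G'.loopless.irrefl u (he ▸ h2)⟩
  have hMu : ∀ u ∈ M, (M \ {u}).ncard = M.ncard - 1 := fun u hu =>
    Set.ncard_diff_singleton_of_mem hu
  -- the inequality for vertices of M, in ℚ
  have hkeyM : ∀ u ∈ M, (rq ^ 2 + rq - 1) * ((r^2 + (r^2 + r) + M.ncard : ℚ) - 1)
      ≤ ((r:ℚ)^2 + ({u' | u' ∈ M ∧ G'.Adj u u'}.ncard : ℚ)) * (2 * rq ^ 2 + 2 * rq - 1) := by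
    intro u hu
    have h1 := hkey _ (hu : Sum.inl u ∈ Q)
    rw [hdegM u hu, hQcard] at h1
    push_cast at h1 ⊢
    convert h1 using 2 <;> push_cast <;> ring
  -- m = r
  have hmr : M.ncard = r := by
    obtain ⟨u, hu⟩ := (Set.ncard_pos (Set.toFinite M)).1 hMne
    have h1 := hkeyM u hu
    have hd : ({u' | u' ∈ M ∧ G'.Adj u u'}.ncard : ℚ) ≤ (M.ncard : ℚ) - 1 := by
      have := Set.ncard_le_ncard (hSsub u hu) (Set.toFinite _)
      rw [hMu u hu] at this
      have h3 : {u' | u' ∈ M ∧ G'.Adj u u'}.ncard + 1 ≤ M.ncard := by omega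
      have := (Nat.cast_le (α := ℚ)).2 h3
      push_cast at this; linarith
    have hmq : (M.ncard : ℚ) ≤ rq := by rw [hrq]; exact_mod_cast hmler
    have hmq1 : (1:ℚ) ≤ (M.ncard : ℚ) := by exact_mod_cast hMne
    have h4 : rq ≤ (M.ncard : ℚ) := by nlinarith
    rw [hrq] at h4
    have : r ≤ M.ncard := by exact_mod_cast h4
    omega
  -- every u ∈ M is adjacent to all of M \ {u}
  have hadjall : ∀ u ∈ M, ∀ u' ∈ M, u' ≠ u → G'.Adj u u' := by
    intro u hu
    have h1 := hkeyM u hu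
    rw [hmr] at h1
    have hdge : (rq - 1) ≤ ({u' | u' ∈ M ∧ G'.Adj u u'}.ncard : ℚ) := by nlinarith
    have hdge' : r - 1 ≤ {u' | u' ∈ M ∧ G'.Adj u u'}.ncard := by
      have : (r:ℚ) ≤ ({u' | u' ∈ M ∧ G'.Adj u u'}.ncard : ℚ) + 1 := by push_cast; linarith
      have := (Nat.cast_le (α := ℚ)).1 (by push_cast; linarith : ((r:ℕ):ℚ) ≤ (({u' | u' ∈ M ∧ G'.Adj u u'}.ncard + 1 : ℕ) : ℚ))
      omega
    have heq : {u' | u' ∈ M ∧ G'.Adj u u'} = M \ {u} := by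
      apply Set.eq_of_subset_of_ncard_le (hSsub u hu) _ (Set.toFinite _)
      rw [hMu u hu, hmr]; exact hdge'
    intro u' hu' hne
    have : u' ∈ M \ {u} := ⟨hu', hne⟩
    rw [← heq] at this
    exact this.2
  refine ⟨(Set.toFinite M).toFinset, ?_, ?_⟩
  · intro u hu u' hu' hne
    simp only [Finset.mem_coe, Set.Finite.mem_toFinset] at hu hu'
    exact hadjall u hu u' hu' (fun he => hne he.symm)
  · rw [← Set.ncard_eq_toFinset_card M (Set.toFinite M), hmr]
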